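/- Let φ be a uniform morphism of rank r over a finite alphabet Σ such that for every σ ∈ Σ the string φ(σ) contains every symbol of Σ. Then for every n ∈ ℕ and every δ ∈ (0,1) there exists m ∈ ℕ such that for all a, b ∈ Σ: LCS(φ^m(a), φ^m(b)) ≥ (1 − (1 − 1/(|Σ|²·r))^n − δ) · r^m. -/

import Mathlib

/-- The length of a longest common subsequence of two strings (lists). -/
noncomputable def lcsLen {α : Type*} (S T : List α) : ℕ :=
  sSup {n | ∃ U : List α, U.length = n ∧ U.Sublist S ∧ U.Sublist T}

/-- The edit distance (insertions/deletions) between two strings, via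
`ED(S,T) = |S| + |T| - 2·LCS(S,T)`. -/
noncomputable def editDistance {α : Type*} (S T : List α) : ℕ :=
  S.length + T.length - 2 * lcsLen S T

/-- `strSlice S a b` is the substring `S[a, b)` of `S` (1-indexed, `b` excluded). -/
def strSlice {α : Type*} (S : List α) (a b : ℕ) : List α :=
  (S.drop (a - 1)).take (b - a)

/-- `islice f a b` is the substring `f[a, b)` of the infinite string `f`
(1-indexed, `b` excluded). -/
def islice {α : Type*} (f : ℕ → α) (a b : ℕ) : List α :=
  (List.range (b - a)).map fun t => f (a + t)

/-- `S` is an ε-synchronization string: for all `1 ≤ i < j < k ≤ |S| + 1`,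
`ED(S[i,j), S[j,k)) > (1-ε)(k-i)`. -/
def IsSyncString {α : Type*} (ε : ℝ) (S : List α) : Prop :=
  ∀ i j k : ℕ, 1 ≤ i → i < j → j < k → k ≤ S.length + 1 →
    (1 - ε) * ((k : ℝ) - (i : ℝ)) < (editDistance (strSlice S i j) (strSlice S j k) : ℝ)

/-- `S` is an ε-synchronization circle: every cyclic rotation of `S` is an
ε-synchronization string. -/
def IsSyncCircle {α : Type*} (ε : ℝ) (S : List α) : Prop :=
  ∀ i : ℕ, 1 ≤ i → i ≤ S.length → IsSyncString ε (S.rotate (i - 1))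

/-- An infinite ε-synchronization string (1-indexed). -/
def IsInfSyncString {α : Type*} (ε : ℝ) (f : ℕ → α) : Prop :=
  ∀ i j k : ℕ, 1 ≤ i → i < j → j < k →
    (1 - ε) * ((k : ℝ) - (i : ℝ)) < (editDistance (islice f i j) (islice f j k) : ℝ)

/-- `S` is a `c`-long-distance ε-synchronization string: for all
`1 ≤ i < j ≤ i' < j' ≤ |S| + 1` with `l = (j-i)+(j'-i')`, if the two intervals
are adjacent (`i' = j`) or `l > c · log |S|`, then
`ED(S[i,j), S[i',j')) > (1-ε)·l`. -/
noncomputable def IsLongDistSyncString {α : Type*} (c ε : ℝ) (S : List α) : Prop :=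
  ∀ i j i' j' : ℕ, 1 ≤ i → i < j → j ≤ i' → i' < j' → j' ≤ S.length + 1 →
    (i' = j ∨ c * Real.log (S.length : ℝ) < ((j : ℝ) - i) + ((j' : ℝ) - i')) →
    (1 - ε) * (((j : ℝ) - i) + ((j' : ℝ) - i')) <
      (editDistance (strSlice S i j) (strSlice S i' j') : ℝ)

/-- An infinite weak ε-synchronization string: for all `1 ≤ i < j < k`,
`ED(S[i,j), S[j,k)) ≥ ⌊(1-ε)(k-i)⌋`. -/
def IsInfWeakSyncString {α : Type*} (ε : ℝ) (f : ℕ → α) : Prop :=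
  ∀ i j k : ℕ, 1 ≤ i → i < j → j < k →
    ((⌊(1 - ε) * ((k : ℝ) - (i : ℝ))⌋ : ℤ) : ℝ) ≤
      (editDistance (islice f i j) (islice f j k) : ℝ)

section LCSBasic
variable {α : Type*}

lemma lcsSet_nonempty (S T : List α) :
    {n | ∃ U : List α, U.length = n ∧ U.Sublist S ∧ U.Sublist T}.Nonempty :=
  ⟨0, [], rfl, List.nil_sublist _, List.nil_sublist _⟩

lemma lcsSet_bdd (S T : List α) :
    BddAbove {n | ∃ U : List α, U.length = n ∧ U.Sublist S ∧ U.Sublist T} := by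
  refine ⟨S.length, ?_⟩
  rintro n ⟨U, rfl, hS, -⟩
  exact hS.length_le

lemma le_lcsLen {U S T : List α} (h1 : U.Sublist S) (h2 : U.Sublist T) :
    U.length ≤ lcsLen S T :=
  le_csSup (lcsSet_bdd S T) ⟨U, rfl, h1, h2⟩

lemma lcsLen_witness (S T : List α) :
    ∃ U : List α, U.length = lcsLen S T ∧ U.Sublist S ∧ U.Sublist T :=
  Nat.sSup_mem (lcsSet_nonempty S T) (lcsSet_bdd S T)

lemma lcsLen_le_length_left (S T : List α) : lcsLen S T ≤ S.length := by
  obtain ⟨U, hU, h1, -⟩ := lcsLen_witness S T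
  exact hU ▸ h1.length_le

lemma lcsLen_self (S : List α) : lcsLen S S = S.length :=
  le_antisymm (lcsLen_le_length_left S S)
    (le_lcsLen (List.Sublist.refl S) (List.Sublist.refl S))

lemma lcsLen_append (S₁ S₂ T₁ T₂ : List α) :
    lcsLen S₁ T₁ + lcsLen S₂ T₂ ≤ lcsLen (S₁ ++ S₂) (T₁ ++ T₂) := by
  obtain ⟨U₁, h₁, hS₁, hT₁⟩ := lcsLen_witness S₁ T₁
  obtain ⟨U₂, h₂, hS₂, hT₂⟩ := lcsLen_witness S₂ T₂
  have := le_lcsLen (hS₁.append hS₂) (hT₁.append hT₂)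
  simpa [h₁, h₂] using this

lemma lcsLen_mono {S T S' T' : List α} (hS : S.Sublist S') (hT : T.Sublist T') :
    lcsLen S T ≤ lcsLen S' T' := by
  obtain ⟨U, hU, h1, h2⟩ := lcsLen_witness S T
  exact hU ▸ le_lcsLen (h1.trans hS) (h2.trans hT)

lemma flatten_sublist_flatten {l l' : List (List α)} (h : l.Sublist l') :
    l.flatten.Sublist l'.flatten := by
  induction h with
  | slnil => simp
  | cons a _ ih => exact ih.trans (by simp [List.flatten_cons, List.sublist_append_right])
  | cons_cons a _ ih => simpa [List.flatten_cons] using ih.append_left a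

lemma getD_drop' (l : List α) (n i : ℕ) (d : α) :
    (l.drop n).getD i d = l.getD (n + i) d := by
  simp [List.getD, List.getElem?_drop]

end LCSBasic

section Morph
variable {α : Type*} (φ : α → List α)

def Fm (w : List α) : List α := (w.map φ).flatten

def gm (m : ℕ) (σ : α) : List α := (Fm φ)^[m] [σ]

def Pm (m : ℕ) (w : List α) : List α := (w.map (gm φ m)).flatten

lemma Fm_append (u v : List α) : Fm φ (u ++ v) = Fm φ u ++ Fm φ v := by
  simp [Fm]

lemma Fm_iter_nil (m : ℕ) : (Fm φ)^[m] ([] : List α) = [] := by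
  induction m with
  | zero => rfl
  | succ m ih => rw [Function.iterate_succ_apply]; simpa [Fm] using ih

lemma Fm_iter_append (m : ℕ) (u v : List α) :
    (Fm φ)^[m] (u ++ v) = (Fm φ)^[m] u ++ (Fm φ)^[m] v := by
  induction m generalizing u v with
  | zero => rfl
  | succ m ih =>
    rw [Function.iterate_succ_apply, Function.iterate_succ_apply,
      Function.iterate_succ_apply, Fm_append, ih]

lemma Fm_iter_word (m : ℕ) (w : List α) : (Fm φ)^[m] w = Pm φ m w := by
  induction w with
  | nil => simp [Pm, Fm_iter_nil]
  | cons x w ih =>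
    have : (x :: w) = [x] ++ w := rfl
    rw [this, Fm_iter_append, ih]
    simp [Pm, gm]

lemma Pm_cons (m : ℕ) (x : α) (w : List α) :
    Pm φ m (x :: w) = gm φ m x ++ Pm φ m w := by simp [Pm]

lemma gm_succ (m : ℕ) (σ : α) : gm φ (m + 1) σ = Pm φ m (φ σ) := by
  rw [gm, Function.iterate_succ_apply]
  have : Fm φ [σ] = φ σ := by simp [Fm]
  rw [this, Fm_iter_word]

variable {r : ℕ}

lemma Pm_length (m : ℕ) (h : ∀ σ, (gm φ m σ).length = r ^ m) (w : List α) :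
    (Pm φ m w).length = w.length * r ^ m := by
  induction w with
  | nil => simp [Pm]
  | cons x w ih =>
    rw [Pm_cons, List.length_append, ih, h]
    simp [List.length_cons, Nat.succ_mul, Nat.add_comm]

lemma gm_length (hφ : ∀ σ, (φ σ).length = r) : ∀ m σ, (gm φ m σ).length = r ^ m := by
  intro m
  induction m with
  | zero => intro σ; simp [gm]
  | succ m ih =>
    intro σ
    rw [gm_succ, Pm_length φ m ih, hφ, pow_succ, Nat.mul_comm]

lemma Fm_length (hφ : ∀ σ : α, (φ σ).length = r) (w : List α) :
    (Fm φ w).length = w.length * r := by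
  have := Pm_length φ 1 (fun σ => by
    have := gm_length φ hφ 1 σ; simpa using this) w
  have e : Pm φ 1 w = Fm φ w := by
    rw [← Fm_iter_word]; rfl
  rw [e] at this
  simpa using this

lemma pairwise_sum_le (m : ℕ) (a0 : α) : ∀ X Y : List α,
    ∑ i ∈ Finset.range (min X.length Y.length),
      lcsLen (gm φ m (X.getD i a0)) (gm φ m (Y.getD i a0))
      ≤ lcsLen (Pm φ m X) (Pm φ m Y) := by
  intro X
  induction X with
  | nil => intro Y; simp
  | cons x X ih =>
    intro Y
    cases Y with
    | nil => simp
    | cons y Y =>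
      have hmin : min (x :: X).length (y :: Y).length = min X.length Y.length + 1 := by
        simp [List.length_cons, Nat.succ_min_succ]
      rw [hmin, Finset.sum_range_succ']
      simp only [List.getD_cons_succ, List.getD_cons_zero]
      rw [Pm_cons, Pm_cons]
      calc (∑ i ∈ Finset.range (min X.length Y.length),
            lcsLen (gm φ m (X.getD i a0)) (gm φ m (Y.getD i a0)))
            + lcsLen (gm φ m x) (gm φ m y)
          ≤ lcsLen (Pm φ m X) (Pm φ m Y) + lcsLen (gm φ m x) (gm φ m y) := by
            exact Nat.add_le_add_right (ih Y) _
        _ = lcsLen (gm φ m x) (gm φ m y) + lcsLen (Pm φ m X) (Pm φ m Y) := Nat.add_comm _ _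
        _ ≤ _ := lcsLen_append _ _ _ _

lemma F_getD (hφ : ∀ σ : α, (φ σ).length = r) (a0 : α) :
    ∀ (Z : List α) (q p : ℕ), p < r → q < Z.length →
      (Fm φ Z).getD (q * r + p) a0 = (φ (Z.getD q a0)).getD p a0 := by
  intro Z
  induction Z with
  | nil => intro q p _ h; simp at h
  | cons z Z ih =>
    intro q p hp hq
    cases q with
    | zero =>
      have hz : Fm φ (z :: Z) = φ z ++ Fm φ Z := by simp [Fm]
      rw [hz]
      simpa using List.getD_append (φ z) (Fm φ Z) a0 p (by rw [hφ]; exact hp)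
    | succ q =>
      have hz : Fm φ (z :: Z) = φ z ++ Fm φ Z := by simp [Fm]
      have hidx : (q + 1) * r + p = (φ z).length + (q * r + p) := by
        rw [hφ]; ring
      rw [hz, hidx, List.getD_append_right (φ z) (Fm φ Z) a0 _ (Nat.le_add_right _ _)]
      rw [Nat.add_sub_cancel_left]
      have := ih q p hp (by simpa using hq)
      simpa using this

lemma window (hφ : ∀ σ : α, (φ σ).length = r) (hall : ∀ σ τ : α, τ ∈ φ σ)
    (hr : 0 < r) (a0 : α) (Z : List α) (i : ℕ) (hi : i + 2 * r ≤ (Fm φ Z).length)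
    (x : α) : ∃ d, d < 2 * r ∧ (Fm φ Z).getD (i + d) a0 = x := by
  have hlen : (Fm φ Z).length = Z.length * r := Fm_length φ hφ Z
  set q := i / r + 1 with hqdef
  have h1 : i < q * r := by
    have hm := Nat.mod_lt i hr
    have hd := Nat.div_add_mod i r
    rw [hqdef, Nat.add_mul, Nat.one_mul, Nat.mul_comm]
    omega
  have h2 : q * r ≤ i + r := by
    have := Nat.div_mul_le_self i r
    calc q * r = i / r * r + r := by rw [hqdef, Nat.add_mul, Nat.one_mul]
      _ ≤ i + r := by omega
  have hqZ : q < Z.length := by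
    have : q * r + r ≤ Z.length * r := by omega
    have : (q + 1) * r ≤ Z.length * r := by rw [Nat.add_mul]; omega
    have := Nat.le_of_mul_le_mul_right this hr
    omega
  obtain ⟨p, hp, hpx⟩ : ∃ p, p < r ∧ (φ (Z.getD q a0)).getD p a0 = x := by
    obtain ⟨j, hj, he⟩ := List.getElem_of_mem (hall (Z.getD q a0) x)
    exact ⟨j, by rw [← hφ (Z.getD q a0)]; exact hj,
      by rw [List.getD_eq_getElem _ _ hj, he]⟩
  refine ⟨q * r + p - i, by omega, ?_⟩
  have : i + (q * r + p - i) = q * r + p := by omega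
  rw [this, F_getD φ hφ a0 Z q p hp hqZ, hpx]

end Morph

section Key
variable {α : Type*} [Fintype α] [Nonempty α] (φ : α → List α) {r : ℕ}

noncomputable def Lmin (m : ℕ) : ℕ :=
  Finset.univ.inf' Finset.univ_nonempty (fun p : α × α => lcsLen (gm φ m p.1) (gm φ m p.2))

lemma Lmin_le (m : ℕ) (a b : α) : Lmin φ m ≤ lcsLen (gm φ m a) (gm φ m b) :=
  Finset.inf'_le _ (Finset.mem_univ (a, b))

lemma le_Lmin {m n0 : ℕ} (h : ∀ a b : α, n0 ≤ lcsLen (gm φ m a) (gm φ m b)) :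
    n0 ≤ Lmin φ m :=
  Finset.le_inf' _ _ (fun p _ => h p.1 p.2)

lemma Lmin_le_pow (hφ : ∀ σ : α, (φ σ).length = r) (m : ℕ) : Lmin φ m ≤ r ^ m := by
  obtain ⟨a0⟩ := ‹Nonempty α›
  exact (Lmin_le φ m a0 a0).trans (le_of_eq (by rw [lcsLen_self, gm_length φ hφ]))

lemma key_nat (hφ : ∀ σ : α, (φ σ).length = r) (hall : ∀ σ τ : α, τ ∈ φ σ)
    (hr : 0 < r) {k : ℕ} (hk : 1 ≤ k) (hR : 2 * r ≤ r ^ k) (m : ℕ) (s t : α) :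
    ∃ C : ℕ, r ^ k - 2 * r + 1 ≤ 2 * r * C ∧
      (r ^ k - 2 * r + 1) * Lmin φ m + C * (r ^ m - Lmin φ m)
        ≤ lcsLen (gm φ (m + k) s) (gm φ (m + k) t) := by
  classical
  obtain ⟨a0⟩ := ‹Nonempty α›
  set R := r ^ k with hRdef
  set N := R - 2 * r + 1 with hNdef
  set X := gm φ k s with hXdef
  set Y := gm φ k t with hYdef
  have hX : X.length = R := gm_length φ hφ k s
  have hY : Y.length = R := gm_length φ hφ k t
  have hYZ : ∃ Z : List α, Y = Fm φ Z := by
    obtain ⟨k', rfl⟩ : ∃ k', k = k' + 1 := ⟨k - 1, by omega⟩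
    refine ⟨gm φ k' t, ?_⟩
    rw [hYdef]
    show (Fm φ)^[k' + 1] [t] = Fm φ ((Fm φ)^[k'] [t])
    exact Function.iterate_succ_apply' _ _ _
  obtain ⟨Z, hZ⟩ := hYZ
  have hwin : ∀ i ∈ Finset.range N, ∃ d ∈ Finset.range (2 * r),
      Y.getD (i + d) a0 = X.getD i a0 := by
    intro i hi
    rw [Finset.mem_range] at hi
    have h2 : i + 2 * r ≤ (Fm φ Z).length := by rw [← hZ, hY]; omega
    obtain ⟨d, hd, he⟩ := window φ hφ hall hr a0 Z i h2 (X.getD i a0)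
    exact ⟨d, Finset.mem_range.mpr hd, by rw [hZ]; exact he⟩
  set Cf : ℕ → ℕ := fun d =>
    ((Finset.range N).filter (fun i => Y.getD (i + d) a0 = X.getD i a0)).card with hCf
  have hpig : N ≤ ∑ d ∈ Finset.range (2 * r), Cf d := by
    have hsw : ∑ d ∈ Finset.range (2 * r), Cf d
        = ∑ i ∈ Finset.range N,
            ((Finset.range (2 * r)).filter
              (fun d => Y.getD (i + d) a0 = X.getD i a0)).card := by
      simp only [hCf, Finset.card_filter]
      rw [Finset.sum_comm]
    rw [hsw]
    calc N = ∑ _i ∈ Finset.range N, 1 := by simp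
      _ ≤ _ := Finset.sum_le_sum (fun i hi => Finset.card_pos.mpr (by
          obtain ⟨d, hd, he⟩ := hwin i hi
          exact ⟨d, Finset.mem_filter.mpr ⟨hd, he⟩⟩))
  obtain ⟨dm, hdm, hdmax⟩ := Finset.exists_max_image (Finset.range (2 * r)) Cf
    ⟨0, Finset.mem_range.mpr (by omega)⟩
  have hCbound : N ≤ 2 * r * Cf dm := by
    have hs := Finset.sum_le_card_nsmul (Finset.range (2 * r)) Cf (Cf dm)
      (fun x hx => hdmax x hx)
    rw [Finset.card_range, smul_eq_mul] at hs
    exact hpig.trans hs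
  refine ⟨Cf dm, hCbound, ?_⟩
  have hdm2r : dm < 2 * r := Finset.mem_range.mp hdm
  have hgs : gm φ (m + k) s = Pm φ m X := by
    rw [hXdef, ← Fm_iter_word]
    exact Function.iterate_add_apply _ m k _
  have hgt : gm φ (m + k) t = Pm φ m Y := by
    rw [hYdef, ← Fm_iter_word]
    exact Function.iterate_add_apply _ m k _
  rw [hgs, hgt]
  have step1 : lcsLen (Pm φ m X) (Pm φ m (Y.drop dm)) ≤ lcsLen (Pm φ m X) (Pm φ m Y) :=
    lcsLen_mono (List.Sublist.refl _)
      (flatten_sublist_flatten ((List.drop_sublist _ _).map _))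
  have hminXY : min X.length (Y.drop dm).length = R - dm := by
    rw [List.length_drop, hX, hY]; omega
  have step2 := pairwise_sum_le φ m a0 X (Y.drop dm)
  rw [hminXY] at step2
  have step3 : ∑ i ∈ Finset.range N,
      (Lmin φ m + if Y.getD (i + dm) a0 = X.getD i a0 then r ^ m - Lmin φ m else 0)
      ≤ ∑ i ∈ Finset.range (R - dm),
          lcsLen (gm φ m (X.getD i a0)) (gm φ m ((Y.drop dm).getD i a0)) := by
    refine le_trans (Finset.sum_le_sum ?_)
      (Finset.sum_le_sum_of_subset (Finset.range_subset_range.mpr (by omega)))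
    intro i _
    have hterm : (Y.drop dm).getD i a0 = Y.getD (i + dm) a0 := by
      rw [getD_drop', Nat.add_comm]
    rw [hterm]
    by_cases hmatch : Y.getD (i + dm) a0 = X.getD i a0
    · rw [if_pos hmatch, hmatch]
      have h1 : lcsLen (gm φ m (X.getD i a0)) (gm φ m (X.getD i a0)) = r ^ m := by
        rw [lcsLen_self, gm_length φ hφ]
      rw [h1]
      have := Lmin_le_pow φ hφ m
      omega
    · rw [if_neg hmatch, Nat.add_zero]
      exact Lmin_le φ m _ _
  have hsplit : ∑ i ∈ Finset.range N,
      (Lmin φ m + if Y.getD (i + dm) a0 = X.getD i a0 then r ^ m - Lmin φ m else 0)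
      = N * Lmin φ m + Cf dm * (r ^ m - Lmin φ m) := by
    rw [Finset.sum_add_distrib, Finset.sum_const, Finset.card_range, smul_eq_mul]
    congr 1
    rw [← Finset.sum_filter, Finset.sum_const, smul_eq_mul]
  rw [hsplit] at step3
  exact le_trans (le_trans step3 step2) step1

end Key
section RealPart
variable {α : Type*} [Fintype α] [Nonempty α] (φ : α → List α) {r : ℕ}

lemma key_real (hφ : ∀ σ : α, (φ σ).length = r) (hall : ∀ σ τ : α, τ ∈ φ σ)
    (hr2 : 2 ≤ r) {k : ℕ} (hk : 1 ≤ k) (hR : 2 * r ≤ r ^ k) (m : ℕ) :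
    ((r : ℝ) ^ k - 2 * r + 1) * (Lmin φ m : ℝ)
      + ((r : ℝ) ^ k - 2 * r + 1) / (2 * r) * ((r : ℝ) ^ m - (Lmin φ m : ℝ))
      ≤ (Lmin φ (m + k) : ℝ) := by
  have hrpos : (0 : ℝ) < r := by
    have : (0:ℕ) < r := by omega
    exact_mod_cast this
  have hr2' : (2:ℝ) ≤ (r:ℝ) := by exact_mod_cast hr2
  have h2rpos : (0 : ℝ) < 2 * r := by linarith
  have hNcast : ((r ^ k - 2 * r + 1 : ℕ) : ℝ) = (r : ℝ) ^ k - 2 * r + 1 := by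
    rw [Nat.cast_add, Nat.cast_sub hR]
    push_cast
    ring
  have hMcast : ((r ^ m - Lmin φ m : ℕ) : ℝ) = (r : ℝ) ^ m - (Lmin φ m : ℝ) := by
    rw [Nat.cast_sub (Lmin_le_pow φ hφ m)]
    push_cast
    ring
  have hwnn : (0 : ℝ) ≤ (r : ℝ) ^ m - (Lmin φ m : ℝ) := by
    rw [← hMcast]
    positivity
  obtain ⟨p, -, hp⟩ := Finset.exists_mem_eq_inf' (Finset.univ_nonempty)
    (fun p : α × α => lcsLen (gm φ (m + k) p.1) (gm φ (m + k) p.2))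
  have hLM : Lmin φ (m + k) = lcsLen (gm φ (m + k) p.1) (gm φ (m + k) p.2) := hp
  obtain ⟨C, hC1, hC2⟩ := key_nat φ hφ hall (by omega) hk hR m p.1 p.2
  have hC2' : ((r ^ k - 2 * r + 1 : ℕ) : ℝ) * (Lmin φ m : ℝ)
      + (C : ℝ) * ((r : ℝ) ^ m - (Lmin φ m : ℝ)) ≤ (Lmin φ (m + k) : ℝ) := by
    rw [hLM]
    have := (Nat.cast_le (α := ℝ)).mpr hC2
    push_cast at this ⊢
    rw [hMcast] at this
    linarith
  have hC1' : ((r ^ k - 2 * r + 1 : ℕ) : ℝ) / (2 * r) ≤ (C : ℝ) := by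
    rw [div_le_iff₀ h2rpos]
    have := (Nat.cast_le (α := ℝ)).mpr hC1
    push_cast at this ⊢
    linarith
  have hmul := mul_le_mul_of_nonneg_right hC1' hwnn
  rw [hNcast] at hC2' hC1' hmul
  linarith

lemma W_rec (hφ : ∀ σ : α, (φ σ).length = r) (hall : ∀ σ τ : α, τ ∈ φ σ)
    (hr2 : 2 ≤ r) {k : ℕ} (hk : 1 ≤ k) (hR : 2 * r ≤ r ^ k) (m : ℕ) :
    (r : ℝ) ^ (m + k) - (Lmin φ (m + k) : ℝ)
      ≤ 2 * r * (r : ℝ) ^ m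
        + (1 - 1 / (2 * (r : ℝ))) * (r : ℝ) ^ k * ((r : ℝ) ^ m - (Lmin φ m : ℝ)) := by
  have hrpos : (0 : ℝ) < r := by
    have : (0:ℕ) < r := by omega
    exact_mod_cast this
  have hr2' : (2:ℝ) ≤ (r:ℝ) := by exact_mod_cast hr2
  have h2rpos : (0 : ℝ) < 2 * r := by linarith
  have hkey := key_real φ hφ hall hr2 hk hR m
  have hMle : (Lmin φ m : ℝ) ≤ (r : ℝ) ^ m := by
    have := Lmin_le_pow φ hφ m
    exact_mod_cast this
  have hw : (0 : ℝ) ≤ (r : ℝ) ^ m - (Lmin φ m : ℝ) := by linarith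
  have hu1 : 1 / (2 * (r : ℝ)) ≤ 1 := by
    rw [div_le_one h2rpos]
    linarith
  have hpowadd : (r : ℝ) ^ (m + k) = (r : ℝ) ^ m * (r : ℝ) ^ k := pow_add _ _ _
  set u : ℝ := 1 / (2 * (r : ℝ)) with hu
  set L : ℝ := (Lmin φ m : ℝ) with hL
  set M : ℝ := (Lmin φ (m + k) : ℝ) with hM
  set Rr : ℝ := (r : ℝ) ^ k with hRr
  set rm : ℝ := (r : ℝ) ^ m with hrm
  -- hkey : (Rr - 2r + 1) * L + (Rr - 2r + 1)/(2r) * (rm - L) ≤ M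
  have hkey' : (Rr - 2 * r + 1) * L + (Rr - 2 * r + 1) * u * (rm - L) ≤ M := by
    have : (Rr - 2 * r + 1) / (2 * r) = (Rr - 2 * r + 1) * u := by
      rw [hu]; ring
    rw [← this]
    exact hkey
  have hid : 2 * r * rm + (1 - u) * Rr * (rm - L)
      - (rm * Rr - ((Rr - 2 * r + 1) * L + (Rr - 2 * r + 1) * u * (rm - L)))
      = rm + (1 - u) * (2 * r - 1) * (rm - L) := by ring
  have hnn : 0 ≤ rm + (1 - u) * (2 * r - 1) * (rm - L) := by
    have h1 : (0:ℝ) ≤ 1 - u := by rw [hu]; linarith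
    have h2 : (0:ℝ) ≤ 2 * r - 1 := by linarith
    have := mul_nonneg (mul_nonneg h1 h2) hw
    have hrmnn : (0:ℝ) ≤ rm := by rw [hrm]; positivity
    linarith
  rw [hpowadd]
  linarith

lemma W_iter (hφ : ∀ σ : α, (φ σ).length = r) (hall : ∀ σ τ : α, τ ∈ φ σ)
    (hr2 : 2 ≤ r) {k : ℕ} (hk : 1 ≤ k) (hR : 2 * r ≤ r ^ k) :
    ∀ j : ℕ, (r : ℝ) ^ (j * k) - (Lmin φ (j * k) : ℝ)
      ≤ ((1 - 1 / (2 * (r : ℝ))) ^ j + 4 * (r : ℝ) ^ 2 / (r : ℝ) ^ k) * (r : ℝ) ^ (j * k) := by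
  have hrpos : (0 : ℝ) < r := by
    have : (0:ℕ) < r := by omega
    exact_mod_cast this
  have hr2' : (2:ℝ) ≤ (r:ℝ) := by exact_mod_cast hr2
  have hRkpos : (0 : ℝ) < (r : ℝ) ^ k := by positivity
  set u : ℝ := 1 / (2 * (r : ℝ)) with hu
  set B : ℝ := 4 * (r : ℝ) ^ 2 / (r : ℝ) ^ k with hB
  have hBnn : 0 ≤ B := by rw [hB]; positivity
  have hBRk : B * (r : ℝ) ^ k = 4 * (r : ℝ) ^ 2 := by
    rw [hB]; field_simp
  have hunn : 0 ≤ 1 - u := by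
    rw [hu]
    have : 1 / (2 * (r : ℝ)) ≤ 1 := by
      rw [div_le_one (by linarith)]
      linarith
    linarith
  have huRk : (1 - u) * (4 * (r:ℝ)^2) = 4 * (r:ℝ)^2 - 2 * r := by
    rw [hu]
    field_simp
    ring
  intro j
  induction j with
  | zero =>
    simp only [Nat.zero_mul, pow_zero, mul_one, one_mul]
    have : (0:ℝ) ≤ (Lmin φ 0 : ℝ) := by positivity
    linarith
  | succ j ih =>
    have hjk : (j + 1) * k = j * k + k := by ring
    rw [hjk]
    have hrec := W_rec φ hφ hall hr2 hk hR (j * k)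
    -- bound W(jk) by IH
    have hcoef : (0:ℝ) ≤ (1 - u) * (r : ℝ) ^ k := mul_nonneg hunn (le_of_lt hRkpos)
    have h2 := mul_le_mul_of_nonneg_left ih hcoef
    have hpowadd : (r : ℝ) ^ (j * k + k) = (r : ℝ) ^ (j * k) * (r : ℝ) ^ k := pow_add _ _ _
    have hrjknn : (0:ℝ) < (r : ℝ) ^ (j * k) := by positivity
    -- final coefficient inequality times r^(jk)
    have hcoefineq : 2 * (r:ℝ) + (1 - u) * (r:ℝ)^k * ((1 - u) ^ j + B)
        ≤ ((1 - u) ^ (j + 1) + B) * (r:ℝ)^k := by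
      have e1 : (1 - u) * (r:ℝ)^k * ((1 - u) ^ j + B)
          = (1 - u)^(j+1) * (r:ℝ)^k + (1 - u) * (B * (r:ℝ)^k) := by ring
      have e2 : ((1 - u) ^ (j + 1) + B) * (r:ℝ)^k
          = (1 - u)^(j+1) * (r:ℝ)^k + B * (r:ℝ)^k := by ring
      rw [e1, e2, hBRk, huRk]
      linarith
    have hmul := mul_le_mul_of_nonneg_left hcoefineq (le_of_lt hrjknn)
    calc (r : ℝ) ^ (j * k + k) - (Lmin φ (j * k + k) : ℝ)
        ≤ 2 * r * (r : ℝ) ^ (j * k)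
          + (1 - u) * (r : ℝ) ^ k * ((r : ℝ) ^ (j * k) - (Lmin φ (j * k) : ℝ)) := hrec
      _ ≤ 2 * r * (r : ℝ) ^ (j * k)
          + (1 - u) * (r : ℝ) ^ k * (((1 - u) ^ j + B) * (r : ℝ) ^ (j * k)) := by linarith
      _ = (r : ℝ) ^ (j * k) * (2 * r + (1 - u) * (r:ℝ)^k * ((1 - u) ^ j + B)) := by ring
      _ ≤ (r : ℝ) ^ (j * k) * (((1 - u) ^ (j + 1) + B) * (r:ℝ)^k) := hmul
      _ = ((1 - u) ^ (j + 1) + B) * (r : ℝ) ^ (j * k + k) := by rw [hpowadd]; ring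

lemma main_est (hφ : ∀ σ : α, (φ σ).length = r) (hall : ∀ σ τ : α, τ ∈ φ σ)
    (hr2 : 2 ≤ r) (ε : ℝ) (hε : 0 < ε) :
    ∃ m : ℕ, ∀ a b : α, (1 - ε) * (r : ℝ) ^ m ≤ (lcsLen (gm φ m a) (gm φ m b) : ℝ) := by
  have hrpos : (0 : ℝ) < r := by
    have : (0:ℕ) < r := by omega
    exact_mod_cast this
  have hr2' : (2:ℝ) ≤ (r:ℝ) := by exact_mod_cast hr2
  set K : ℕ := Nat.ceil (8 * (r:ℝ)^2 / ε) + 2 * r + 1 with hK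
  have hKlt : K < 2 ^ K := Nat.lt_two_pow_self
  have h2K : (2:ℕ) ^ K ≤ r ^ K := Nat.pow_le_pow_left hr2 K
  have hKrK : K < r ^ K := lt_of_lt_of_le hKlt h2K
  have hRK : 2 * r ≤ r ^ K := by omega
  have hK1 : 1 ≤ K := by omega
  have hrKpos : (0 : ℝ) < (r:ℝ) ^ K := by positivity
  have hceil : 8 * (r:ℝ)^2 / ε ≤ (r:ℝ) ^ K := by
    have h1 : 8 * (r:ℝ)^2 / ε ≤ (Nat.ceil (8 * (r:ℝ)^2 / ε) : ℝ) := Nat.le_ceil _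
    have h2 : (Nat.ceil (8 * (r:ℝ)^2 / ε) : ℝ) ≤ (K : ℝ) := by
      rw [hK]; push_cast; linarith
    have h3 : (K : ℝ) ≤ (r:ℝ) ^ K := by
      have := hKrK.le
      exact_mod_cast this
    linarith
  have hB : 4 * (r:ℝ)^2 / (r:ℝ)^K ≤ ε / 2 := by
    rw [div_le_div_iff₀ hrKpos (by norm_num : (0:ℝ) < 2)]
    have := (div_le_iff₀ hε).mp hceil
    nlinarith
  have hult1 : 1 - 1 / (2 * (r : ℝ)) < 1 := by
    have : 0 < 1 / (2 * (r : ℝ)) := by positivity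
    linarith
  have hunn : 0 ≤ 1 - 1 / (2 * (r : ℝ)) := by
    have : 1 / (2 * (r : ℝ)) ≤ 1 := by
      rw [div_le_one (by linarith)]
      linarith
    linarith
  obtain ⟨j, hj⟩ := exists_pow_lt_of_lt_one (half_pos hε) hult1
  refine ⟨j * K, fun a b => ?_⟩
  have hiter := W_iter φ hφ hall hr2 hK1 hRK j
  have hrjk : (0:ℝ) < (r:ℝ) ^ (j * K) := by positivity
  have hcoef : (1 - 1 / (2 * (r : ℝ))) ^ j + 4 * (r : ℝ) ^ 2 / (r : ℝ) ^ K ≤ ε := by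
    linarith
  have hW : (r : ℝ) ^ (j * K) - (Lmin φ (j * K) : ℝ) ≤ ε * (r : ℝ) ^ (j * K) := by
    calc (r : ℝ) ^ (j * K) - (Lmin φ (j * K) : ℝ)
        ≤ ((1 - 1 / (2 * (r : ℝ))) ^ j + 4 * (r : ℝ) ^ 2 / (r : ℝ) ^ K) * (r : ℝ) ^ (j * K) :=
          hiter
      _ ≤ ε * (r : ℝ) ^ (j * K) := mul_le_mul_of_nonneg_right hcoef (le_of_lt hrjk)
  have hLm : (Lmin φ (j * K) : ℝ) ≤ (lcsLen (gm φ (j * K) a) (gm φ (j * K) b) : ℝ) := by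
    exact_mod_cast Lmin_le φ (j * K) a b
  linarith

end RealPart

/-- If `φ` is a uniform morphism of rank `r` over a finite
alphabet `Σ` such that `φ(σ)` contains every symbol of `Σ` for each `σ`, then
for every `n` and `δ ∈ (0,1)` there is an `m` such that for all `a, b`,
`LCS(φ^m(a), φ^m(b)) ≥ (1 − (1 − 1/(|Σ|²·r))^n − δ)·r^m`. -/
theorem morphism_lcs_lower_bound {α : Type*} [Fintype α] (r : ℕ)
    (φ : α → List α) (hφ : ∀ σ : α, (φ σ).length = r)
    (hall : ∀ σ τ : α, τ ∈ φ σ)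
    (n : ℕ) (δ : ℝ) (hδ : 0 < δ) (hδ1 : δ < 1) :
    ∃ m : ℕ, ∀ a b : α,
      (1 - (1 - 1 / ((Fintype.card α : ℝ) ^ 2 * (r : ℝ))) ^ n - δ) * (r : ℝ) ^ m ≤
        (lcsLen ((fun l : List α => (l.map φ).flatten)^[m] [a])
                ((fun l : List α => (l.map φ).flatten)^[m] [b]) : ℝ) := by
  rcases isEmpty_or_nonempty α with hE | hNE
  · exact ⟨0, fun a b => (hE.false a).elim⟩
  have hFm : (fun l : List α => (l.map φ).flatten) = Fm φ := rfl
  have hr0 : 0 < r := by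
    obtain ⟨a0⟩ := hNE
    have hmem := hall a0 a0
    have hne : φ a0 ≠ [] := List.ne_nil_of_mem hmem
    have hlen := List.length_pos_iff.mpr hne
    rw [hφ] at hlen
    exact hlen
  have hc1 : 1 ≤ Fintype.card α := Fintype.card_pos
  have hbase : 0 ≤ 1 - 1 / ((Fintype.card α : ℝ) ^ 2 * (r : ℝ)) := by
    have h1 : (1:ℝ) ≤ (Fintype.card α : ℝ) := by exact_mod_cast hc1
    have h2 : (1:ℝ) ≤ (r:ℝ) := by exact_mod_cast hr0
    have h3 : (1:ℝ) ≤ (Fintype.card α : ℝ) ^ 2 * (r : ℝ) := by nlinarith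
    have h4 : 1 / ((Fintype.card α : ℝ) ^ 2 * (r : ℝ)) ≤ 1 := by
      rw [div_le_one (by linarith)]
      linarith
    linarith
  have hpow0 : 0 ≤ (1 - 1 / ((Fintype.card α : ℝ) ^ 2 * (r : ℝ))) ^ n :=
    pow_nonneg hbase n
  by_cases hcard : Fintype.card α ≤ 1
  · refine ⟨0, fun a b => ?_⟩
    haveI : Subsingleton α := Fintype.card_le_one_iff_subsingleton.mp hcard
    have hab : a = b := Subsingleton.elim a b
    subst hab
    simp only [Function.iterate_zero, id_eq, pow_zero, mul_one]
    rw [lcsLen_self]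
    simp only [List.length_cons, List.length_nil]
    push_cast
    linarith
  · push_neg at hcard
    haveI := Classical.decEq α
    have hcr : Fintype.card α ≤ r := by
      obtain ⟨a0⟩ := hNE
      have hsub : (Finset.univ : Finset α) ⊆ (φ a0).toFinset :=
        fun τ _ => List.mem_toFinset.mpr (hall a0 τ)
      calc Fintype.card α = (Finset.univ : Finset α).card := rfl
        _ ≤ (φ a0).toFinset.card := Finset.card_le_card hsub
        _ ≤ (φ a0).length := (φ a0).toFinset_card_le
        _ = r := hφ a0
    have hr2 : 2 ≤ r := le_trans hcard hcr
    set ε : ℝ := (1 - 1 / ((Fintype.card α : ℝ) ^ 2 * (r : ℝ))) ^ n + δ with hε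
    have hεpos : 0 < ε := by rw [hε]; linarith
    obtain ⟨m, hm⟩ := main_est φ hφ hall hr2 ε hεpos
    refine ⟨m, fun a b => ?_⟩
    have hmab := hm a b
    have hcoef : 1 - (1 - 1 / ((Fintype.card α : ℝ) ^ 2 * (r : ℝ))) ^ n - δ = 1 - ε := by
      rw [hε]; ring
    rw [hcoef, hFm]
    exact hmab
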